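/- The Alexander biquandle X = ℤ[s^{±1}, t^{±1}]/(s + t, t^4 − 1) has type 4, while its associated quandle Q(X) has type 2. -/

import Mathlib

/-- The Laurent polynomial ring `ℤ[s^{±1}, t^{±1}]` in two variables. -/
noncomputable abbrev LaurentTwo : Type := AddMonoidAlgebra ℤ (ℤ × ℤ)

/-- The variable `s`. -/
noncomputable def sVar : LaurentTwo := AddMonoidAlgebra.of' ℤ (ℤ × ℤ) (1, 0)

/-- The variable `t`. -/
noncomputable def tVar : LaurentTwo := AddMonoidAlgebra.of' ℤ (ℤ × ℤ) (0, 1)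

def uZ : (ZMod 5)ˣ := ⟨2, 3, by decide, by decide⟩
def vZ : (ZMod 5)ˣ := ⟨3, 2, by decide, by decide⟩

def gHom : Multiplicative (ℤ × ℤ) →* (ZMod 5)ˣ where
  toFun x := vZ ^ (Multiplicative.toAdd x).1 * uZ ^ (Multiplicative.toAdd x).2
  map_one' := by simp
  map_mul' x y := by
    simp only [toAdd_mul, Prod.fst_add, Prod.snd_add, zpow_add]
    rw [mul_mul_mul_comm]

noncomputable def fHom : LaurentTwo →+* ZMod 5 :=
  ((AddMonoidAlgebra.lift ℤ (ZMod 5) (ℤ × ℤ)) ((Units.coeHom (ZMod 5)).comp gHom)).toRingHom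

lemma fHom_s : fHom sVar = 3 := by
  simp [fHom, sVar, AddMonoidAlgebra.lift_of', gHom]; decide

lemma fHom_t : fHom tVar = 2 := by
  simp [fHom, tVar, AddMonoidAlgebra.lift_of', gHom]; decide

noncomputable abbrev myI : Ideal LaurentTwo := Ideal.span {sVar + tVar, tVar ^ 4 - 1}

lemma hker : ∀ a ∈ myI, fHom a = 0 := by
  intro a ha
  have : myI ≤ RingHom.ker fHom := by
    rw [Ideal.span_le]
    rintro x hx
    simp only [Set.mem_insert_iff, Set.mem_singleton_iff] at hx
    rcases hx with rfl | rfl <;>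
      simp [RingHom.mem_ker, map_add, map_sub, map_pow, fHom_s, fHom_t] <;> decide
  exact this ha

noncomputable def phi : LaurentTwo ⧸ myI →+* ZMod 5 := Ideal.Quotient.lift myI fHom hker

lemma phi_t : phi (Ideal.Quotient.mk myI tVar) = 2 := by
  simp [phi, fHom_t]

lemma hst : (Ideal.Quotient.mk myI sVar) = -(Ideal.Quotient.mk myI tVar) := by
  have h : Ideal.Quotient.mk myI (sVar + tVar) = 0 :=
    Ideal.Quotient.eq_zero_iff_mem.mpr (Ideal.subset_span (Set.mem_insert _ _))
  rw [map_add] at h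
  linear_combination h

lemma ht4 : (Ideal.Quotient.mk myI tVar) ^ 4 = 1 := by
  have h : Ideal.Quotient.mk myI (tVar ^ 4 - 1) = 0 :=
    Ideal.Quotient.eq_zero_iff_mem.mpr (Ideal.subset_span (Set.mem_insert_of_mem _ rfl))
  rw [map_sub, map_pow, map_one, sub_eq_zero] at h
  exact h

lemma hinv : Ring.inverse (Ideal.Quotient.mk myI sVar) * Ideal.Quotient.mk myI tVar = -1 := by
  set T := Ideal.Quotient.mk myI tVar
  have hu : IsUnit (Ideal.Quotient.mk myI sVar) := by
    refine IsUnit.of_mul_eq_one (-(T ^ 3)) ?_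
    rw [hst]; linear_combination ht4
  have h1 : Ring.inverse (Ideal.Quotient.mk myI sVar) * Ideal.Quotient.mk myI sVar = 1 :=
    Ring.inverse_mul_cancel _ hu
  nth_rewrite 2 [hst] at h1
  linear_combination -h1

lemma tn_ne (n : ℕ) (hn : n = 1 ∨ n = 2 ∨ n = 3) :
    (Ideal.Quotient.mk myI tVar) ^ n ≠ 1 := by
  intro h
  have := congrArg phi h
  rw [map_pow, map_one, phi_t] at this
  rcases hn with rfl | rfl | rfl <;> revert this <;> decide

lemma two_ne : (2 : LaurentTwo ⧸ myI) ≠ 0 := by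
  intro h
  have := congrArg phi h
  rw [map_ofNat, map_zero] at this
  revert this; decide

/-- The Alexander biquandle `X = ℤ[s^{±1},t^{±1}]/(s + t, t⁴ − 1)` has type `4`
(the least `n > 0` with `tⁿa + (sⁿ−tⁿ)b = a` and `sⁿa = a` for all `a, b ∈ X`),
while its associated quandle `Q(X)`, with `x * y = s⁻¹t·x + (1 − s⁻¹t)·y`,
has type `2`. -/
theorem stmt_6 :
    IsLeast {n : ℕ | 0 < n ∧ ∀ a b : LaurentTwo ⧸ Ideal.span {sVar + tVar, tVar ^ 4 - 1},
        (Ideal.Quotient.mk _ tVar) ^ n * a +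
          ((Ideal.Quotient.mk _ sVar) ^ n - (Ideal.Quotient.mk _ tVar) ^ n) * b = a ∧
        (Ideal.Quotient.mk _ sVar) ^ n * a = a} 4 ∧
    IsLeast {n : ℕ | 0 < n ∧ ∀ x y : LaurentTwo ⧸ Ideal.span {sVar + tVar, tVar ^ 4 - 1},
        (Ring.inverse (Ideal.Quotient.mk _ sVar) * Ideal.Quotient.mk _ tVar) ^ n * x +
          (1 - (Ring.inverse (Ideal.Quotient.mk _ sVar) * Ideal.Quotient.mk _ tVar) ^ n) * y
          = x} 2 := by
  have hs4 : (Ideal.Quotient.mk myI sVar) ^ 4 = 1 := by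
    rw [hst]; rw [show (-(Ideal.Quotient.mk myI tVar)) ^ 4 = (Ideal.Quotient.mk myI tVar) ^ 4 by ring]
    exact ht4
  constructor
  · constructor
    · refine ⟨by norm_num, fun a b => ?_⟩
      rw [ht4, hs4]
      constructor <;> ring
    · intro n hn
      obtain ⟨hn0, h⟩ := hn
      by_contra hlt
      push_neg at hlt
      have h1 := (h 1 0).1
      rw [mul_zero, add_zero, mul_one] at h1
      interval_cases n
      · exact tn_ne 1 (by norm_num) h1
      · exact tn_ne 2 (by norm_num) h1
      · exact tn_ne 3 (by norm_num) h1
  · constructor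
    · refine ⟨by norm_num, fun x y => ?_⟩
      rw [hinv]
      ring
    · intro n hn
      obtain ⟨hn0, h⟩ := hn
      by_contra hlt
      push_neg at hlt
      interval_cases n
      have h1 := h 0 1
      rw [hinv, pow_one] at h1
      exact two_ne (by linear_combination h1)
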